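/- Let L ≥ 2 be an integer, η ∈ ℂ, x₁,…,x_{L−1} ∈ ℂ with x_i − x_j ∉ iπℤ for i ≠ j, and let f : ℂ → ℂ be a function such that f(t) converges to a limit f_∞ ∈ ℂ as t → +∞ along the real axis. Then lim_{t→+∞, t real} A_{(x₁,…,x_{L−1},t)}[f] = (1 − f_∞·e^{−(L−1)η}) · A_{(x₁,…,x_{L−1})}[e^η·f], where e^η·f denotes the function λ ↦ e^η f(λ). -/

import Mathlib

open Complex Finset Filter

noncomputable section

def Vand {m : ℕ} (x : Fin m → ℂ) : ℂ :=
  ∏ i : Fin m, ∏ j ∈ Finset.Ioi i, Complex.sinh (x j - x i)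

/-- the SoV determinant functional `A_{(y₁,…,y_m)}[g]` -/
def Afun {m : ℕ} (η : ℂ) (y : Fin m → ℂ) (g : ℂ → ℂ) : ℂ :=
  Matrix.det (Matrix.of (fun i j : Fin m =>
      Complex.exp ((2 * ((j : ℕ) : ℂ) + 1 - (m : ℂ)) * y i) / 2 ^ (j : ℕ) -
        g (y i) *
          Complex.exp ((2 * ((j : ℕ) : ℂ) + 1 - (m : ℂ)) * (y i - η)) / 2 ^ (j : ℕ))) /
    Vand y

def iπ : ℂ := (Real.pi : ℂ) * Complex.I

lemma sinh_ne_zero_of (z : ℂ) (h : ∀ m : ℤ, z ≠ (m : ℂ) * iπ) : Complex.sinh z ≠ 0 := by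
  intro h0
  have hs : Complex.sin (z * Complex.I) = 0 := by
    rw [Complex.sin_mul_I, h0, zero_mul]
  obtain ⟨k, hk⟩ := Complex.sin_eq_zero_iff.mp hs
  apply h (-k)
  push_cast [iπ]
  linear_combination (-Complex.I) * hk + z * Complex.I_mul_I

lemma tendsto_cexp_neg (r : ℝ) (hr : r < 0) :
    Tendsto (fun t : ℝ => Complex.exp ((r : ℂ) * (t : ℂ))) atTop (nhds 0) := by
  rw [tendsto_zero_iff_norm_tendsto_zero]
  have h1 : ∀ t : ℝ, ‖Complex.exp ((r : ℂ) * (t : ℂ))‖ = Real.exp (r * t) := by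
    intro t
    rw [Complex.norm_exp, ← Complex.ofReal_mul, Complex.ofReal_re]
  simp only [h1]
  exact Real.tendsto_exp_atBot.comp (tendsto_id.const_mul_atTop_of_neg hr)

lemma vand_snoc (n : ℕ) (x : Fin n → ℂ) (t : ℂ) :
    Vand (Fin.snoc x t) = Vand x * ∏ i, Complex.sinh (t - x i) := by
  unfold Vand
  rw [Fin.prod_univ_castSucc]
  have hlast : Finset.Ioi (Fin.last n) = (∅ : Finset (Fin (n+1))) := by
    ext j
    simp [Finset.mem_Ioi, not_lt.mpr (Fin.le_last j)]
  rw [hlast, Finset.prod_empty, mul_one]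
  have hIoi : ∀ i : Fin n, Finset.Ioi (Fin.castSucc i)
      = insert (Fin.last n) ((Finset.Ioi i).map Fin.castSuccEmb) := by
    intro i
    ext j
    simp only [Finset.mem_Ioi, Finset.mem_insert, Finset.mem_map, Fin.castSuccEmb,
      Function.Embedding.coeFn_mk]
    constructor
    · intro hj
      rcases Fin.eq_castSucc_or_eq_last j with ⟨j', rfl⟩ | rfl
      · exact Or.inr ⟨j', by simpa [Fin.castSucc_lt_castSucc_iff] using hj, rfl⟩
      · exact Or.inl rfl
    · rintro (rfl | ⟨j', hj', rfl⟩)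
      · exact Fin.castSucc_lt_last i
      · exact Fin.castSucc_lt_castSucc_iff.mpr hj'
  have hstep : ∀ i : Fin n,
      (∏ j ∈ Finset.Ioi (Fin.castSucc i),
        Complex.sinh ((Fin.snoc x t : Fin (n+1) → ℂ) j - (Fin.snoc x t : Fin (n+1) → ℂ) (Fin.castSucc i)))
      = Complex.sinh (t - x i) * ∏ j ∈ Finset.Ioi i, Complex.sinh (x j - x i) := by
    intro i
    rw [Fin.snoc_castSucc, hIoi i,
      Finset.prod_insert (by simp only [Finset.mem_map]; rintro ⟨a, _, ha⟩; exact (Fin.castSucc_lt_last a).ne ha),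
      Finset.prod_map, Fin.snoc_last]
    congr 1
    refine Finset.prod_congr rfl fun j _ => ?_
    have hj : (Fin.castSuccEmb j : Fin (n+1)) = Fin.castSucc j := rfl
    rw [hj, Fin.snoc_castSucc]
  rw [Finset.prod_congr rfl (fun i _ => hstep i), Finset.prod_mul_distrib]
  ring

section Main

variable (n : ℕ) (η : ℂ) (x : Fin n → ℂ) (f : ℂ → ℂ) (finf : ℂ)

/-- the rows corresponding to the fixed variables -/
def rowX : Fin n → Fin (n+1) → ℂ := fun i j =>
  Complex.exp ((2 * ((j : ℕ) : ℂ) + 1 - ((n : ℂ) + 1)) * x i) / 2 ^ (j : ℕ) -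
    f (x i) * Complex.exp ((2 * ((j : ℕ) : ℂ) + 1 - ((n : ℂ) + 1)) * (x i - η)) / 2 ^ (j : ℕ)

/-- the rescaled last row -/
def rowT (t : ℝ) : Fin (n+1) → ℂ := fun j =>
  ((2 : ℂ) ^ n / 2 ^ (j : ℕ)) * Complex.exp ((2 * ((j : ℕ) : ℂ) - 2 * n) * t) *
    (1 - f t * Complex.exp (-(2 * ((j : ℕ) : ℂ) + 1 - ((n : ℂ) + 1)) * η))

def rowInf : Fin (n+1) → ℂ := fun j =>
  if j = Fin.last n then
    1 - finf * Complex.exp (-(2 * ((Fin.last n : ℕ) : ℂ) + 1 - ((n : ℂ) + 1)) * η)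
  else 0

def Nmat (t : ℝ) : Matrix (Fin (n+1)) (Fin (n+1)) ℂ :=
  Matrix.of (Fin.snoc (rowX n η x f) (rowT n η f t))

def Ninf : Matrix (Fin (n+1)) (Fin (n+1)) ℂ :=
  Matrix.of (Fin.snoc (rowX n η x f) (rowInf n η finf))

/-- the unscaled matrix, as it appears in `Afun` -/
def Mmat (t : ℝ) : Matrix (Fin (n+1)) (Fin (n+1)) ℂ :=
  Matrix.of (fun i j : Fin (n+1) =>
      Complex.exp ((2 * ((j : ℕ) : ℂ) + 1 - ((n + 1 : ℕ) : ℂ)) * (Fin.snoc x (t : ℂ) : Fin (n+1) → ℂ) i) / 2 ^ (j : ℕ) -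
        f ((Fin.snoc x (t : ℂ) : Fin (n+1) → ℂ) i) *
          Complex.exp ((2 * ((j : ℕ) : ℂ) + 1 - ((n + 1 : ℕ) : ℂ)) *
            ((Fin.snoc x (t : ℂ) : Fin (n+1) → ℂ) i - η)) / 2 ^ (j : ℕ))

lemma det_nmat (t : ℝ) :
    (Nmat n η x f t).det
      = (2 ^ n * Complex.exp (-(n : ℂ) * t)) * (Mmat n η x f t).det := by
  have hmat : Nmat n η x f t
      = Matrix.updateRow (Mmat n η x f t) (Fin.last n)
          ((2 ^ n * Complex.exp (-(n : ℂ) * t)) • (Mmat n η x f t (Fin.last n))) := by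
    ext i j
    refine Fin.lastCases ?_ ?_ i
    · rw [Matrix.updateRow_self]
      simp only [Nmat, Matrix.of_apply, Fin.snoc_last, rowT, Mmat, Pi.smul_apply,
        smul_eq_mul, Fin.snoc_last]
      have e1 : Complex.exp (-(n : ℂ) * t) *
          Complex.exp ((2 * ((j : ℕ) : ℂ) + 1 - ((n + 1 : ℕ) : ℂ)) * t)
          = Complex.exp ((2 * ((j : ℕ) : ℂ) - 2 * n) * t) := by
        rw [← Complex.exp_add]; congr 1; push_cast; ring
      have e2 : Complex.exp (-(n : ℂ) * t) *
          Complex.exp ((2 * ((j : ℕ) : ℂ) + 1 - ((n + 1 : ℕ) : ℂ)) * ((t : ℂ) - η))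
          = Complex.exp ((2 * ((j : ℕ) : ℂ) - 2 * n) * t) *
              Complex.exp (-(2 * ((j : ℕ) : ℂ) + 1 - ((n : ℂ) + 1)) * η) := by
        rw [← Complex.exp_add, ← Complex.exp_add]; congr 1; push_cast; ring
      symm
      calc (2 : ℂ) ^ n * Complex.exp (-(n:ℂ) * t) *
            (Complex.exp ((2 * ((j : ℕ) : ℂ) + 1 - ((n + 1 : ℕ) : ℂ)) * t) / 2 ^ (j : ℕ) -
              f t * Complex.exp ((2 * ((j : ℕ) : ℂ) + 1 - ((n + 1 : ℕ) : ℂ)) * ((t : ℂ) - η)) / 2 ^ (j : ℕ))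
          = ((2:ℂ) ^ n / 2 ^ (j : ℕ)) *
              ((Complex.exp (-(n:ℂ) * t) * Complex.exp ((2 * ((j : ℕ) : ℂ) + 1 - ((n + 1 : ℕ) : ℂ)) * t)) -
                f t * (Complex.exp (-(n:ℂ) * t) *
                  Complex.exp ((2 * ((j : ℕ) : ℂ) + 1 - ((n + 1 : ℕ) : ℂ)) * ((t : ℂ) - η)))) := by ring
        _ = _ := by rw [e1, e2]; ring
    · intro i'
      rw [Matrix.updateRow_ne (Fin.castSucc_lt_last i').ne]
      simp only [Nmat, Matrix.of_apply, Fin.snoc_castSucc, rowX, Mmat]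
      norm_num
  rw [hmat, Matrix.det_updateRow_smul, Matrix.updateRow_eq_self]

lemma afun_snoc (t : ℝ) :
    Afun η (Fin.snoc x (t : ℂ)) f
      = (Nmat n η x f t).det /
          (Vand x * ∏ i, (Complex.exp (-x i) - Complex.exp (x i - 2 * t))) := by
  have hA : Afun η (Fin.snoc x (t : ℂ)) f
      = (Mmat n η x f t).det / Vand (Fin.snoc x (t : ℂ)) := rfl
  rw [hA, vand_snoc]
  have hs : ((2 : ℂ) ^ n * Complex.exp (-(n : ℂ) * t)) ≠ 0 :=
    mul_ne_zero (pow_ne_zero _ two_ne_zero) (Complex.exp_ne_zero _)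
  have hfac : ∀ i : Fin n, Complex.exp (-x i) - Complex.exp (x i - 2 * t)
      = (2 * Complex.exp (-(t : ℂ))) * Complex.sinh ((t : ℂ) - x i) := by
    intro i
    rw [show Complex.sinh ((t:ℂ) - x i) = (Complex.exp ((t:ℂ) - x i) - Complex.exp (-((t:ℂ) - x i))) / 2 from rfl]
    have e3 : Complex.exp (-(t : ℂ)) * Complex.exp ((t : ℂ) - x i)
        = Complex.exp (-x i) := by rw [← Complex.exp_add]; congr 1; ring
    have e4 : Complex.exp (-(t : ℂ)) * Complex.exp (-((t : ℂ) - x i))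
        = Complex.exp (x i - 2 * t) := by rw [← Complex.exp_add]; congr 1; ring
    linear_combination e4 - e3
  have hden : Vand x * ∏ i, (Complex.exp (-x i) - Complex.exp (x i - 2 * t))
      = ((2 : ℂ) ^ n * Complex.exp (-(n : ℂ) * t)) *
          (Vand x * ∏ i, Complex.sinh ((t : ℂ) - x i)) := by
    rw [Finset.prod_congr rfl (fun i _ => hfac i), Finset.prod_mul_distrib,
      Finset.prod_const, Finset.card_univ, Fintype.card_fin, mul_pow,
      ← Complex.exp_nat_mul, show ((n : ℂ) * -(t : ℂ)) = -(n : ℂ) * t by ring]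
    ring
  rw [det_nmat, hden, mul_div_mul_left _ _ hs]

lemma tendsto_nmat (hf : Tendsto (fun t : ℝ => f (t : ℂ)) atTop (nhds finf)) :
    Tendsto (fun t : ℝ => (Nmat n η x f t).det) atTop
      (nhds (Ninf n η x f finf).det) := by
  have hN : Tendsto (fun t : ℝ => Nmat n η x f t) atTop (nhds (Ninf n η x f finf)) := by
    apply tendsto_pi_nhds.mpr
    intro i
    rw [tendsto_pi_nhds]
    intro j
    refine Fin.lastCases ?_ (fun i' => ?_) i
    · simp only [Nmat, Ninf, Matrix.of_apply, Fin.snoc_last, rowT, rowInf]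
      by_cases hj : j = Fin.last n
      · subst hj
        simp only [if_pos rfl, Fin.val_last, div_self (pow_ne_zero n (two_ne_zero (α := ℂ))),
          show (2 * (n : ℂ) - 2 * n) = 0 by ring, zero_mul, Complex.exp_zero, one_mul]
        exact tendsto_const_nhds.sub (hf.mul_const _)
      · simp only [if_neg hj]
        have hjn : (j : ℕ) < n := by
          have h1 : (j : ℕ) < n + 1 := j.isLt
          have h2 : (j : ℕ) ≠ n := fun h => hj (Fin.ext (by simp [h]))
          omega
        set r : ℝ := 2 * ((j : ℕ) : ℝ) - 2 * (n : ℝ) with hr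
        have hrneg : r < 0 := by
          have : ((j : ℕ) : ℝ) < (n : ℝ) := by exact_mod_cast hjn
          rw [hr]; linarith
        have hcast : ∀ t : ℝ, (2 * ((j : ℕ) : ℂ) - 2 * (n : ℂ)) * (t : ℂ) = (r : ℂ) * t := by
          intro t; rw [hr]; push_cast; ring
        simp only [hcast]
        have h0 : Tendsto (fun t : ℝ =>
            ((2 : ℂ) ^ n / 2 ^ (j : ℕ)) * Complex.exp ((r : ℂ) * t)) atTop (nhds 0) := by
          simpa using (tendsto_cexp_neg r hrneg).const_mul ((2 : ℂ) ^ n / 2 ^ (j : ℕ))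
        have h2 : Tendsto (fun t : ℝ =>
            1 - f t * Complex.exp (-(2 * ((j : ℕ) : ℂ) + 1 - ((n : ℂ) + 1)) * η)) atTop
            (nhds (1 - finf * Complex.exp (-(2 * ((j : ℕ) : ℂ) + 1 - ((n : ℂ) + 1)) * η))) :=
          tendsto_const_nhds.sub (hf.mul_const _)
        simpa using h0.mul h2
    · simp only [Nmat, Ninf, Matrix.of_apply, Fin.snoc_castSucc]
      exact tendsto_const_nhds
  exact ((continuous_id.matrix_det).tendsto _).comp hN

lemma det_ninf :
    (Ninf n η x f finf).det
      = (1 - finf * Complex.exp (-(n : ℂ) * η)) *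
        ((∏ i, Complex.exp (-x i)) *
          (Matrix.of (fun i j : Fin n =>
            Complex.exp ((2 * ((j : ℕ) : ℂ) + 1 - (n : ℂ)) * x i) / 2 ^ (j : ℕ) -
              (Complex.exp η * f (x i)) *
                Complex.exp ((2 * ((j : ℕ) : ℂ) + 1 - (n : ℂ)) * (x i - η)) / 2 ^ (j : ℕ))).det) := by
  rw [Matrix.det_succ_row (Ninf n η x f finf) (Fin.last n)]
  rw [Finset.sum_eq_single (Fin.last n)
    (fun j _ hj => by simp [Ninf, rowInf, Fin.snoc_last, hj])
    (fun h => absurd (Finset.mem_univ _) h)]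
  have hsign : ((-1 : ℂ)) ^ ((Fin.last n : ℕ) + (Fin.last n : ℕ)) = 1 := by
    rw [Fin.val_last, ← two_mul, pow_mul]; norm_num
  have hentry : Ninf n η x f finf (Fin.last n) (Fin.last n)
      = 1 - finf * Complex.exp (-(n : ℂ) * η) := by
    simp only [Ninf, Matrix.of_apply, Fin.snoc_last, rowInf, if_true, eq_self_iff_true, Fin.val_last]
    rw [show (-(2 * (n : ℂ) + 1 - ((n : ℂ) + 1)) * η) = -(n : ℂ) * η by ring]
  have hsub : (Ninf n η x f finf).submatrix (Fin.last n).succAbove (Fin.last n).succAbove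
      = Matrix.of (fun i j : Fin n => Complex.exp (-x i) *
          (Matrix.of (fun i j : Fin n =>
            Complex.exp ((2 * ((j : ℕ) : ℂ) + 1 - (n : ℂ)) * x i) / 2 ^ (j : ℕ) -
              (Complex.exp η * f (x i)) *
                Complex.exp ((2 * ((j : ℕ) : ℂ) + 1 - (n : ℂ)) * (x i - η)) / 2 ^ (j : ℕ))) i j) := by
    ext i j
    simp only [Matrix.submatrix_apply, Fin.succAbove_last, Ninf, Matrix.of_apply,
      Fin.snoc_castSucc, rowX, Fin.coe_castSucc]
    have e5 : Complex.exp (-x i) * Complex.exp ((2 * ((j : ℕ) : ℂ) + 1 - (n : ℂ)) * x i)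
        = Complex.exp ((2 * ((j : ℕ) : ℂ) + 1 - ((n : ℂ) + 1)) * x i) := by
      rw [← Complex.exp_add]; congr 1; ring
    have e6 : Complex.exp (-x i) * (Complex.exp η *
          Complex.exp ((2 * ((j : ℕ) : ℂ) + 1 - (n : ℂ)) * (x i - η)))
        = Complex.exp ((2 * ((j : ℕ) : ℂ) + 1 - ((n : ℂ) + 1)) * (x i - η)) := by
      rw [← Complex.exp_add, ← Complex.exp_add]; congr 1; ring
    linear_combination (-(1 : ℂ) / 2 ^ (j : ℕ)) * e5 + (f (x i) / 2 ^ (j : ℕ)) * e6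
  rw [hsign, hentry, hsub, Matrix.det_mul_column]
  ring

end Main

/-- (Identity 4 of the paper.) Sending the last variable to `+∞`
along the real axis reduces the size of the determinant:
`lim_{t→+∞} A_{(x₁,…,x_{L−1},t)}[f] = (1 − f_∞ e^{−(L−1)η}) · A_{(x₁,…,x_{L−1})}[e^η f]`,
where `L = n+1 ≥ 2`. -/
theorem Afun_limit_last_variable (n : ℕ) (hn : 1 ≤ n) (η : ℂ) (x : Fin n → ℂ)
    (hx : ∀ i j, i ≠ j → ∀ m : ℤ, x i - x j ≠ (m : ℂ) * iπ)
    (f : ℂ → ℂ) (finf : ℂ)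
    (hf : Tendsto (fun t : ℝ => f (t : ℂ)) atTop (nhds finf)) :
    Tendsto (fun t : ℝ => Afun η (Fin.snoc x (t : ℂ)) f) atTop
      (nhds ((1 - finf * Complex.exp (-(n : ℂ) * η)) *
        Afun η x (fun l => Complex.exp η * f l))) := by
  have hVand : Vand x ≠ 0 := by
    unfold Vand
    rw [Finset.prod_ne_zero_iff]
    intro i _
    rw [Finset.prod_ne_zero_iff]
    intro j hj
    have hij : j ≠ i := (Finset.mem_Ioi.mp hj).ne'
    exact sinh_ne_zero_of _ (hx j i hij)
  have hP : (∏ i, Complex.exp (-x i)) ≠ 0 :=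
    Finset.prod_ne_zero_iff.mpr fun i _ => Complex.exp_ne_zero _
  have hden : Tendsto
      (fun t : ℝ => Vand x * ∏ i, (Complex.exp (-x i) - Complex.exp (x i - 2 * t)))
      atTop (nhds (Vand x * ∏ i, Complex.exp (-x i))) := by
    refine tendsto_const_nhds.mul (tendsto_finset_prod _ fun i _ => ?_)
    have hc : ∀ t : ℝ, Complex.exp (x i - 2 * (t : ℂ))
        = Complex.exp (x i) * Complex.exp (((-2 : ℝ) : ℂ) * t) := by
      intro t; rw [← Complex.exp_add]; congr 1; push_cast; ring
    simp only [hc]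
    simpa using tendsto_const_nhds.sub
      ((tendsto_cexp_neg (-2) (by norm_num)).const_mul (Complex.exp (x i)))
  have hnum := tendsto_nmat n η x f finf hf
  have hV : Vand x * ∏ i, Complex.exp (-x i) ≠ 0 := mul_ne_zero hVand hP
  have hmain := hnum.div hden hV
  have hfun : (fun t : ℝ => Afun η (Fin.snoc x (t : ℂ)) f)
      = fun t : ℝ => (Nmat n η x f t).det /
          (Vand x * ∏ i, (Complex.exp (-x i) - Complex.exp (x i - 2 * t))) := by
    funext t; exact afun_snoc n η x f t
  have hAfun : Afun η x (fun l => Complex.exp η * f l)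
      = (Matrix.of (fun i j : Fin n =>
          Complex.exp ((2 * ((j : ℕ) : ℂ) + 1 - (n : ℂ)) * x i) / 2 ^ (j : ℕ) -
            (Complex.exp η * f (x i)) *
              Complex.exp ((2 * ((j : ℕ) : ℂ) + 1 - (n : ℂ)) * (x i - η)) / 2 ^ (j : ℕ))).det /
        Vand x := rfl
  have hconst : (1 - finf * Complex.exp (-(n : ℂ) * η)) *
        Afun η x (fun l => Complex.exp η * f l)
      = (Ninf n η x f finf).det / (Vand x * ∏ i, Complex.exp (-x i)) := by
    rw [det_ninf, hAfun]
    field_simp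
  rw [hfun, hconst]
  exact hmain

end
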